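/- Let G be a connected directed acyclic graph on n ≥ 2 vertices. Then G contains at least n−1 identifiable edges, where an edge V_i → V_j is identifiable if no vertex other than V_i, V_j is both a descendant of V_i and an ancestor of V_j. -/

import Mathlib

open Relation SimpleGraph

/-- A connected simple graph on a finite vertex type has at least `card V - 1` edges. -/
lemma aux_connected_card_le_edges {V : Type*} [Fintype V] (G : SimpleGraph V)
    (h : G.Connected) : Fintype.card V ≤ G.edgeSet.ncard + 1 := by
  classical
  have hne := h.nonempty
  inhabit V
  choose f hf using fun w => (h w default).exists_walk_length_eq_dist
  set g : V → Sym2 V := fun w =>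
    if hw : w = default then s(default, default)
    else ((f w).firstDart (Walk.not_nil_of_ne hw)).edge with hg
  have hmem : ∀ w ∈ (({default} : Finset V)ᶜ), g w ∈ G.edgeSet.toFinset := by
    intro w hw
    have hw' : w ≠ default := by simpa using hw
    simp only [hg, dif_neg hw', Set.mem_toFinset]
    exact ((f w).firstDart (Walk.not_nil_of_ne hw')).edge_mem
  have hinj : Set.InjOn g ↑(({default} : Finset V)ᶜ) := by
    intro a ha b hb hab
    have ha' : a ≠ default := by simpa using ha
    have hb' : b ≠ default := by simpa using hb
    simp only [hg, dif_neg ha', dif_neg hb'] at hab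
    rcases (dart_edge_eq_iff _ _).mp hab with hd | hd
    · exact congrArg (fun d : G.Dart => d.fst) hd
    · -- first darts are reverses of each other: contradiction with geodesics
      have hd' := congrArg (fun d : G.Dart => d.toProd) hd
      simp only [Walk.firstDart, Dart.symm, Prod.swap] at hd'
      have h1 : a = (f b).getVert 1 := congrArg Prod.fst hd'
      have h2 : (f a).getVert 1 = b := congrArg Prod.snd hd'
      exfalso
      have hda : G.dist b default + 1 ≤ G.dist a default := by
        have := G.dist_le (((f a).tail).copy h2 rfl)
        rw [Walk.length_copy] at this
        have hlen := Walk.length_tail_add_one (p := f a) (Walk.not_nil_of_ne ha')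
        rw [hf a] at hlen
        omega
      have hdb : G.dist a default + 1 ≤ G.dist b default := by
        have := G.dist_le (((f b).tail).copy h1.symm rfl)
        rw [Walk.length_copy] at this
        have hlen := Walk.length_tail_add_one (p := f b) (Walk.not_nil_of_ne hb')
        rw [hf b] at hlen
        omega
      omega
  have hcard := Finset.card_le_card_of_injOn g hmem hinj
  rw [Finset.card_compl, Finset.card_singleton] at hcard
  rw [Set.ncard_eq_toFinset_card']
  have hpos : 0 < Fintype.card V := Fintype.card_pos
  omega

theorem stmt_8 {V : Type*} [Fintype V] (E : V → V → Prop)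
    (hacyc : ∀ v : V, ¬ Relation.TransGen E v v)
    (hconn : ∀ a b : V, Relation.ReflTransGen (fun x y => E x y ∨ E y x) a b)
    (hn : 2 ≤ Fintype.card V) :
    Fintype.card V - 1 ≤
      {p : V × V | E p.1 p.2 ∧ ∀ k : V, k ≠ p.1 → k ≠ p.2 →
        ¬ (Relation.TransGen E p.1 k ∧ Relation.TransGen E k p.2)}.ncard := by
  classical
  set S : Set (V × V) := {p : V × V | E p.1 p.2 ∧ ∀ k : V, k ≠ p.1 → k ≠ p.2 →
      ¬ (Relation.TransGen E p.1 k ∧ Relation.TransGen E k p.2)} with hS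
  have hEne : ∀ {x y : V}, E x y → x ≠ y := by
    intro x y h hxy
    subst hxy
    exact hacyc x (Relation.TransGen.single h)
  -- key: any `TransGen E` pair is connected by identifiable edges
  have key : ∀ n (a b : V), Relation.TransGen E a b →
      {k | Relation.TransGen E a k ∧ Relation.TransGen E k b}.ncard ≤ n →
      Relation.ReflTransGen (fun x y => (x, y) ∈ S ∨ (y, x) ∈ S) a b := by
    intro n
    induction n using Nat.strong_induction_on with
    | _ n ih =>
      intro a b hab hcard
      by_cases hemp : {k | Relation.TransGen E a k ∧ Relation.TransGen E k b} = ∅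
      · have heab : E a b := by
          obtain ⟨c, hac, hcb⟩ := Relation.TransGen.head'_iff.mp hab
          rcases Relation.reflTransGen_iff_eq_or_transGen.mp hcb with rfl | htcb
          · exact hac
          · exact absurd (Set.eq_empty_iff_forall_notMem.mp hemp c)
              (by simp [Relation.TransGen.single hac, htcb])
        refine Relation.ReflTransGen.single (Or.inl ?_)
        refine ⟨heab, fun k _ _ hk => ?_⟩
        exact Set.eq_empty_iff_forall_notMem.mp hemp k hk
      · obtain ⟨k, hk⟩ := Set.nonempty_iff_ne_empty.mpr hemp
        obtain ⟨hk1, hk2⟩ := hk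
        have hfin : {m | Relation.TransGen E a m ∧ Relation.TransGen E m b}.Finite :=
          Set.toFinite _
        have hsub1 : {m | Relation.TransGen E a m ∧ Relation.TransGen E m k} ⊆
            {m | Relation.TransGen E a m ∧ Relation.TransGen E m b} :=
          fun m hm => ⟨hm.1, hm.2.trans hk2⟩
        have hsub2 : {m | Relation.TransGen E k m ∧ Relation.TransGen E m b} ⊆
            {m | Relation.TransGen E a m ∧ Relation.TransGen E m b} :=
          fun m hm => ⟨hk1.trans hm.1, hm.2⟩
        have hss1 : {m | Relation.TransGen E a m ∧ Relation.TransGen E m k} ⊂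
            {m | Relation.TransGen E a m ∧ Relation.TransGen E m b} := by
          rw [Set.ssubset_iff_of_subset hsub1]
          exact ⟨k, ⟨hk1, hk2⟩, fun hm => hacyc k hm.2⟩
        have hss2 : {m | Relation.TransGen E k m ∧ Relation.TransGen E m b} ⊂
            {m | Relation.TransGen E a m ∧ Relation.TransGen E m b} := by
          rw [Set.ssubset_iff_of_subset hsub2]
          exact ⟨k, ⟨hk1, hk2⟩, fun hm => hacyc k hm.1⟩
        have hlt1 := Set.ncard_lt_ncard hss1 hfin
        have hlt2 := Set.ncard_lt_ncard hss2 hfin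
        exact (ih _ (by omega) a k hk1 le_rfl).trans (ih _ (by omega) k b hk2 le_rfl)
  -- the simple graph of identifiable edges
  set G : SimpleGraph V :=
    { Adj := fun x y => x ≠ y ∧ ((x, y) ∈ S ∨ (y, x) ∈ S)
      symm := ⟨fun x y h => ⟨h.1.symm, h.2.symm⟩⟩
      loopless := ⟨fun x h => h.1 rfl⟩ } with hG
  have toReach : ∀ x y : V,
      Relation.ReflTransGen (fun x y => (x, y) ∈ S ∨ (y, x) ∈ S) x y → G.Reachable x y := by
    intro x y h
    induction h with
    | refl => exact Reachable.refl x
    | tail _ hstep ihr =>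
      refine ihr.trans (SimpleGraph.Adj.reachable ?_)
      refine ⟨?_, hstep⟩
      rcases hstep with h | h
      · exact hEne h.1
      · exact (hEne h.1).symm
  have hGconn : G.Connected := by
    have : Nonempty V := Fintype.card_pos_iff.mp (by omega)
    refine Connected.mk fun a b => ?_
    induction hconn a b with
    | refl => exact Reachable.refl a
    | tail _ hstep ihr =>
      refine ihr.trans ?_
      rcases hstep with h | h
      · exact toReach _ _ (key _ _ _ (Relation.TransGen.single h) le_rfl)
      · exact (toReach _ _ (key _ _ _ (Relation.TransGen.single h) le_rfl)).symm
  have hsub : G.edgeSet ⊆ (fun p : V × V => s(p.1, p.2)) '' S := by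
    intro e he
    induction e with
    | _ x y =>
      rw [mem_edgeSet] at he
      rcases he.2 with h | h
      · exact ⟨(x, y), h, rfl⟩
      · exact ⟨(y, x), h, Sym2.eq_swap⟩
  have h1 := aux_connected_card_le_edges G hGconn
  have h2 := Set.ncard_le_ncard hsub (Set.toFinite _)
  have h3 := Set.ncard_image_le (s := S) (f := fun p : V × V => s(p.1, p.2)) (Set.toFinite _)
  omega
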